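/- With notation as in the previous statement, suppose additionally |det-free bounds| ‖H‖_{op}, ‖H^{-1}‖_{op} ≤ C₁ and |v| ≤ C₁. Then |(Q_{x'}, Q_{t'})| ≥ c ρ^{-1} |(P_x, P_t)| for a constant c > 0 depending only on C₁ and d, and therefore Angle((−ψ(ξ'),1), tangent space of Z(Q)) ≤ C ρ^{-1} · [the corresponding angle quantity |(−∇φ(ξ),1)·(P_x,P_t)|/|(P_x,P_t)|]. -/

import Mathlib

open Metric
open scoped RealInnerProductSpace

set_option maxHeartbeats 1000000 in
/-- Quantitative bound for the rescaled gradients: under the bounds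
`‖H‖, ‖H⁻¹‖ ≤ C₁`, `|v| ≤ C₁`, one has `|(Q_{x'},Q_{t'})| ≥ c ρ^{-1} |(P_x,P_t)|`, and hence
the rescaled tangency quantity is at most `C ρ^{-1}` times the original one. -/
theorem statement_13 (d : ℕ) (hd : 0 < d) (C₁ : ℝ) (hC₁ : 0 < C₁) :
    ∃ c : ℝ, 0 < c ∧ ∃ C : ℝ, 0 < C ∧
      ∀ (P : EuclideanSpace ℝ (Fin d) × ℝ → ℝ),
      (∃ p : MvPolynomial (Fin (d + 1)) ℝ, ∀ z : EuclideanSpace ℝ (Fin d) × ℝ,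
          P z = MvPolynomial.eval (Fin.snoc (fun i => z.1 i) z.2) p) →
      ∀ (H : EuclideanSpace ℝ (Fin d) ≃L[ℝ] EuclideanSpace ℝ (Fin d)),
        (∀ u w : EuclideanSpace ℝ (Fin d), ⟪H u, w⟫ = ⟪u, H w⟫) →
        ‖(H : EuclideanSpace ℝ (Fin d) →L[ℝ] EuclideanSpace ℝ (Fin d))‖ ≤ C₁ →
        ‖(H.symm : EuclideanSpace ℝ (Fin d) →L[ℝ] EuclideanSpace ℝ (Fin d))‖ ≤ C₁ →
      ∀ (v : EuclideanSpace ℝ (Fin d)), ‖v‖ ≤ C₁ →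
      ∀ (ρ : ℝ), 0 < ρ → ρ ≤ 1 →
      ∀ (φ : EuclideanSpace ℝ (Fin d) → ℝ), Differentiable ℝ φ →
      ∀ z : EuclideanSpace ℝ (Fin d) × ℝ,
        -- |(Q_{x'},Q_{t'})| ≥ c ρ^{-1} |(P_x,P_t)|
        c * ρ⁻¹ * ‖fderiv ℝ P (ρ⁻¹ • H z.1 - (ρ⁻¹ ^ 2 * z.2) • v, ρ⁻¹ ^ 2 * z.2)‖
          ≤ ‖fderiv ℝ (fun w : EuclideanSpace ℝ (Fin d) × ℝ =>
              P (ρ⁻¹ • H w.1 - (ρ⁻¹ ^ 2 * w.2) • v, ρ⁻¹ ^ 2 * w.2)) z‖ ∧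
        -- the angle-quantity comparison
        (fderiv ℝ P (ρ⁻¹ • H z.1 - (ρ⁻¹ ^ 2 * z.2) • v, ρ⁻¹ ^ 2 * z.2) ≠ 0 →
          ∀ ξ : EuclideanSpace ℝ (Fin d),
            |fderiv ℝ (fun w : EuclideanSpace ℝ (Fin d) × ℝ =>
                P (ρ⁻¹ • H w.1 - (ρ⁻¹ ^ 2 * w.2) • v, ρ⁻¹ ^ 2 * w.2)) z
              (-(ρ⁻¹ • H.symm (gradient φ ξ - v)), 1)| /
            ‖fderiv ℝ (fun w : EuclideanSpace ℝ (Fin d) × ℝ =>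
                P (ρ⁻¹ • H w.1 - (ρ⁻¹ ^ 2 * w.2) • v, ρ⁻¹ ^ 2 * w.2)) z‖
            ≤ C * ρ⁻¹ *
              (|fderiv ℝ P (ρ⁻¹ • H z.1 - (ρ⁻¹ ^ 2 * z.2) • v, ρ⁻¹ ^ 2 * z.2)
                  (-(gradient φ ξ), 1)| /
               ‖fderiv ℝ P (ρ⁻¹ • H z.1 - (ρ⁻¹ ^ 2 * z.2) • v, ρ⁻¹ ^ 2 * z.2)‖)) := by
  classical
  refine ⟨((C₁ + 1) ^ 2)⁻¹, by positivity, (C₁ + 1) ^ 2, by positivity, ?_⟩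
  intro P hPpoly H hHsym hH hHinv v hv ρ hρ hρ1 φ hφ z
  -- P is differentiable
  have hPdiff : Differentiable ℝ P := by
    obtain ⟨p, hp⟩ := hPpoly
    have h1 : Differentiable ℝ (fun z : EuclideanSpace ℝ (Fin d) × ℝ =>
        (Fin.snoc (fun i => z.1 i) z.2 : Fin (d + 1) → ℝ)) := by
      rw [differentiable_pi]
      intro j
      induction j using Fin.lastCases with
      | last => simp only [Fin.snoc_last]; exact differentiable_snd
      | cast i =>
          simp only [Fin.snoc_castSucc]
          exact (EuclideanSpace.proj (𝕜 := ℝ) i).differentiable.comp differentiable_fst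
    have h2 : Differentiable ℝ (fun x : Fin (d + 1) → ℝ => MvPolynomial.eval x p) := fun x =>
      ((AnalyticOnNhd.eval_mvPolynomial p) x (Set.mem_univ x)).differentiableAt
    have hPe : P = (fun x : Fin (d + 1) → ℝ => MvPolynomial.eval x p) ∘
        (fun z : EuclideanSpace ℝ (Fin d) × ℝ =>
          (Fin.snoc (fun i => z.1 i) z.2 : Fin (d + 1) → ℝ)) := by
      funext z; exact hp z
    rw [hPe]; exact h2.comp h1
  open ContinuousLinearMap in
  set T : EuclideanSpace ℝ (Fin d) × ℝ →L[ℝ] EuclideanSpace ℝ (Fin d) × ℝ :=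
    ((ρ⁻¹ • ((H : EuclideanSpace ℝ (Fin d) →L[ℝ] EuclideanSpace ℝ (Fin d)).comp
        (fst ℝ (EuclideanSpace ℝ (Fin d)) ℝ))) -
      (smulRight ((ρ⁻¹ ^ 2) • snd ℝ (EuclideanSpace ℝ (Fin d)) ℝ) v)).prod
        ((ρ⁻¹ ^ 2) • snd ℝ (EuclideanSpace ℝ (Fin d)) ℝ) with hT
  open ContinuousLinearMap in
  have hTapp : ∀ w : EuclideanSpace ℝ (Fin d) × ℝ,
      T w = (ρ⁻¹ • H w.1 - (ρ⁻¹ ^ 2 * w.2) • v, ρ⁻¹ ^ 2 * w.2) := by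
    intro w; simp [hT, smul_eq_mul]
  open ContinuousLinearMap in
  set S : EuclideanSpace ℝ (Fin d) × ℝ →L[ℝ] EuclideanSpace ℝ (Fin d) × ℝ :=
    ((ρ • ((H.symm : EuclideanSpace ℝ (Fin d) →L[ℝ] EuclideanSpace ℝ (Fin d)).comp
        ((fst ℝ (EuclideanSpace ℝ (Fin d)) ℝ) +
          smulRight (snd ℝ (EuclideanSpace ℝ (Fin d)) ℝ) v)))).prod
      ((ρ ^ 2) • snd ℝ (EuclideanSpace ℝ (Fin d)) ℝ) with hS
  have hSapp : ∀ u : EuclideanSpace ℝ (Fin d) × ℝ,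
      S u = (ρ • H.symm (u.1 + u.2 • v), ρ ^ 2 * u.2) := by
    intro u; simp [hS, smul_eq_mul]
  have hTS : ∀ u : EuclideanSpace ℝ (Fin d) × ℝ, T (S u) = u := by
    intro u
    rw [hSapp, hTapp, Prod.ext_iff]
    constructor
    · show (ρ⁻¹ • H (ρ • H.symm (u.1 + u.2 • v)) - (ρ⁻¹ ^ 2 * (ρ ^ 2 * u.2)) • v) = u.1
      rw [map_smul, smul_smul, inv_mul_cancel₀ hρ.ne', one_smul, H.apply_symm_apply]
      have : ρ⁻¹ ^ 2 * (ρ ^ 2 * u.2) = u.2 := by field_simp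
      rw [this]; abel
    · show ρ⁻¹ ^ 2 * (ρ ^ 2 * u.2) = u.2
      field_simp
  have hSnorm : ‖S‖ ≤ ρ * (C₁ + 1) ^ 2 := by
    apply ContinuousLinearMap.opNorm_le_bound _ (by positivity)
    intro u
    rw [hSapp, Prod.norm_def]
    apply max_le
    · show ‖ρ • H.symm (u.1 + u.2 • v)‖ ≤ ρ * (C₁ + 1) ^ 2 * ‖u‖
      rw [norm_smul, Real.norm_eq_abs, abs_of_pos hρ]
      have h1 : ‖H.symm (u.1 + u.2 • v)‖ ≤ C₁ * (‖u.1‖ + |u.2| * C₁) := by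
        calc ‖H.symm (u.1 + u.2 • v)‖
            ≤ ‖(H.symm : EuclideanSpace ℝ (Fin d) →L[ℝ] EuclideanSpace ℝ (Fin d))‖ *
              ‖u.1 + u.2 • v‖ :=
              (H.symm : EuclideanSpace ℝ (Fin d) →L[ℝ] EuclideanSpace ℝ (Fin d)).le_opNorm _
          _ ≤ C₁ * (‖u.1‖ + |u.2| * C₁) := by
              apply mul_le_mul hHinv _ (norm_nonneg _) hC₁.le
              calc ‖u.1 + u.2 • v‖ ≤ ‖u.1‖ + ‖u.2 • v‖ := norm_add_le _ _
                _ ≤ ‖u.1‖ + |u.2| * C₁ := by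
                    rw [norm_smul, Real.norm_eq_abs]
                    gcongr
      have h2 : ‖u.1‖ ≤ ‖u‖ := norm_fst_le u
      have h3 : |u.2| ≤ ‖u‖ := norm_snd_le u
      calc ρ * ‖H.symm (u.1 + u.2 • v)‖ ≤ ρ * (C₁ * (‖u.1‖ + |u.2| * C₁)) := by gcongr
        _ ≤ ρ * (C₁ * (‖u‖ + ‖u‖ * C₁)) := by gcongr
        _ ≤ ρ * (C₁ + 1) ^ 2 * ‖u‖ := by
            nlinarith [mul_nonneg (mul_nonneg hρ.le (norm_nonneg u)) hC₁.le,
              mul_nonneg hρ.le (norm_nonneg u)]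
    · show ‖ρ ^ 2 * u.2‖ ≤ ρ * (C₁ + 1) ^ 2 * ‖u‖
      rw [Real.norm_eq_abs, abs_mul, abs_of_pos (by positivity : (0:ℝ) < ρ ^ 2)]
      have h3 : |u.2| ≤ ‖u‖ := norm_snd_le u
      have hr2 : ρ ^ 2 ≤ ρ := by nlinarith
      calc ρ ^ 2 * |u.2| ≤ ρ * ‖u‖ := mul_le_mul hr2 h3 (abs_nonneg _) hρ.le
        _ ≤ ρ * (C₁ + 1) ^ 2 * ‖u‖ := by
            nlinarith [mul_nonneg (mul_nonneg hρ.le (norm_nonneg u)) hC₁.le,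
              mul_nonneg (mul_nonneg hρ.le (norm_nonneg u)) (sq_nonneg C₁),
              mul_nonneg hρ.le (norm_nonneg u)]
  -- rewrite the goal in terms of T
  have hz : (ρ⁻¹ • H z.1 - (ρ⁻¹ ^ 2 * z.2) • v, ρ⁻¹ ^ 2 * z.2) = T z := (hTapp z).symm
  have hfun : (fun w : EuclideanSpace ℝ (Fin d) × ℝ =>
      P (ρ⁻¹ • H w.1 - (ρ⁻¹ ^ 2 * w.2) • v, ρ⁻¹ ^ 2 * w.2)) = P ∘ T := by
    funext w; simp [hTapp, Function.comp]
  rw [hz, hfun]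
  have hfder : fderiv ℝ (P ∘ T) z = (fderiv ℝ P (T z)).comp T :=
    ((hPdiff (T z)).hasFDerivAt.comp z T.hasFDerivAt).fderiv
  rw [hfder]
  set L := fderiv ℝ P (T z) with hL
  -- the key norm inequality
  have hmain : ‖L‖ ≤ ‖L.comp T‖ * (ρ * (C₁ + 1) ^ 2) := by
    apply ContinuousLinearMap.opNorm_le_bound _ (by positivity)
    intro u
    calc ‖L u‖ = ‖(L.comp T) (S u)‖ := by rw [ContinuousLinearMap.comp_apply, hTS]
      _ ≤ ‖L.comp T‖ * ‖S u‖ := (L.comp T).le_opNorm _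
      _ ≤ ‖L.comp T‖ * (ρ * (C₁ + 1) ^ 2 * ‖u‖) := by
          apply mul_le_mul_of_nonneg_left _ (norm_nonneg _)
          exact (S.le_opNorm u).trans (mul_le_mul_of_nonneg_right hSnorm (norm_nonneg u))
      _ = ‖L.comp T‖ * (ρ * (C₁ + 1) ^ 2) * ‖u‖ := by ring
  have part1 : ((C₁ + 1) ^ 2)⁻¹ * ρ⁻¹ * ‖L‖ ≤ ‖L.comp T‖ := by
    have h := mul_le_mul_of_nonneg_left hmain
      (show (0:ℝ) ≤ ((C₁ + 1) ^ 2)⁻¹ * ρ⁻¹ by positivity)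
    have heq : ((C₁ + 1) ^ 2)⁻¹ * ρ⁻¹ * (‖L.comp T‖ * (ρ * (C₁ + 1) ^ 2)) = ‖L.comp T‖ := by
      rw [eq_comm]
      field_simp
    linarith [heq ▸ h]
  refine ⟨part1, ?_⟩
  intro hLne ξ
  have hMpos : 0 < ‖L‖ := norm_pos_iff.mpr hLne
  have hNpos : 0 < ‖L.comp T‖ :=
    lt_of_lt_of_le (by positivity) part1
  -- compute T applied to the rescaled direction vector
  have hTvec : T (-(ρ⁻¹ • H.symm (gradient φ ξ - v)), 1) =
      (ρ⁻¹ ^ 2) • ((-(gradient φ ξ), 1) : EuclideanSpace ℝ (Fin d) × ℝ) := by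
    rw [hTapp, Prod.smul_def, Prod.ext_iff]
    constructor
    · show ρ⁻¹ • H (-(ρ⁻¹ • H.symm (gradient φ ξ - v))) - (ρ⁻¹ ^ 2 * 1) • v =
        ρ⁻¹ ^ 2 • (-(gradient φ ξ))
      rw [map_neg, map_smul, H.apply_symm_apply, mul_one]
      rw [smul_neg, smul_smul, smul_sub, sub_eq_iff_eq_add]
      rw [smul_neg]
      have : ρ⁻¹ * ρ⁻¹ = ρ⁻¹ ^ 2 := (sq ρ⁻¹).symm
      rw [this]
      abel
    · show ρ⁻¹ ^ 2 * 1 = ρ⁻¹ ^ 2 • (1:ℝ)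
      simp
  have hnum : |(L.comp T) (-(ρ⁻¹ • H.symm (gradient φ ξ - v)), 1)| =
      ρ⁻¹ ^ 2 * |L (-(gradient φ ξ), 1)| := by
    rw [ContinuousLinearMap.comp_apply, hTvec, map_smul, smul_eq_mul, abs_mul,
      abs_of_pos (by positivity : (0:ℝ) < ρ⁻¹ ^ 2)]
  rw [hnum]
  have hstep : ρ⁻¹ ^ 2 * |L (-(gradient φ ξ), 1)| / ‖L.comp T‖ ≤
      ρ⁻¹ ^ 2 * |L (-(gradient φ ξ), 1)| / (((C₁ + 1) ^ 2)⁻¹ * ρ⁻¹ * ‖L‖) := by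
    gcongr
  refine hstep.trans (le_of_eq ?_)
  field_simp
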